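/- arXiv:1607.05320 — 3 statements merged into one kernel-verified Lean document; each statement's English description precedes it below -/
import Mathlib

section
/- Piecewise F-syndeticity is partition regular: if F is a filter on a group G whose set of extending ultrafilters is closed under the ultrafilter product, A ⊆ G is piecewise F-syndetic, and A = A₁ ∪ ⋯ ∪ Aₙ is a finite partition, then some Aᵢ is piecewise F-syndetic. -/
/-- A filter on a set `G` in the sense of the paper. -/
def IsFilterOn {G : Type*} (F : Set (Set G)) : Prop :=
  ∅ ∉ F ∧ Set.univ ∈ F ∧ (∀ A B : Set G, A ∈ F → A ⊆ B → B ∈ F) ∧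
    (∀ A B : Set G, A ∈ F → B ∈ F → A ∩ B ∈ F)

/-- An ultrafilter: a filter such that for each set `A`, either `A` or its
complement belongs to the collection. -/
def IsUltraOn {G : Type*} (U : Set (Set G)) : Prop :=
  IsFilterOn U ∧ ∀ A : Set G, A ∈ U ∨ Aᶜ ∈ U

/-- The (ultra)filter product: `A ∈ F·G` iff `{x : {y : x·y ∈ A} ∈ G} ∈ F`. -/
def filterProd {G : Type*} [Mul G] (F₁ F₂ : Set (Set G)) : Set (Set G) :=
  {A | {x | {y | x * y ∈ A} ∈ F₂} ∈ F₁}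

/-- `T = closure of F` in `βG`: the set of all ultrafilters extending the filter `F`. -/
def extendingUltra {G : Type*} (F : Set (Set G)) : Set (Set (Set G)) :=
  {U | IsUltraOn U ∧ F ⊆ U}

/-- `I` is a (two-sided) ideal of the subsemigroup `T` of `βG`. -/
def IsIdealOf {G : Type*} [Mul G] (T I : Set (Set (Set G))) : Prop :=
  I.Nonempty ∧ I ⊆ T ∧
    ∀ p ∈ T, ∀ q ∈ I, filterProd p q ∈ I ∧ filterProd q p ∈ I

/-- `K` is the smallest two-sided ideal `K(T)` of `T`. -/
def IsSmallestIdealOf {G : Type*} [Mul G] (T K : Set (Set (Set G))) : Prop :=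
  IsIdealOf T K ∧ ∀ I, IsIdealOf T I → K ⊆ I

lemma ultra_iUnion_mem {G : Type*} (p : Set (Set G)) (hp : IsUltraOn p) :
    ∀ n (As : Fin n → Set G), (⋃ i, As i) ∈ p → ∃ i, As i ∈ p := by
  obtain ⟨⟨hne, huniv, hmono, hinter⟩, halt⟩ := hp
  intro n
  induction n with
  | zero =>
    intro As h
    exfalso
    apply hne
    have : (⋃ i : Fin 0, As i) = (∅ : Set G) := by simp
    rwa [this] at h
  | succ m ih =>
    intro As h
    rcases halt (As 0) with h0 | h0
    · exact ⟨0, h0⟩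
    · have hsub : (As 0)ᶜ ∩ (⋃ i, As i) ⊆ ⋃ i : Fin m, As i.succ := by
        rintro x ⟨hxc, hxu⟩
        simp only [Set.mem_iUnion] at hxu ⊢
        obtain ⟨i, hi⟩ := hxu
        rcases Fin.eq_zero_or_eq_succ i with rfl | ⟨j, rfl⟩
        · exact absurd hi hxc
        · exact ⟨j, hi⟩
      have := hmono _ _ (hinter _ _ h0 h) hsub
      obtain ⟨i, hi⟩ := ih (fun i => As i.succ) this
      exact ⟨i.succ, hi⟩

/-- Piecewise `F`-syndeticity (membership in some ultrafilter of the smallest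
ideal `K(T)` of the semigroup `T` of ultrafilters extending `F`) is partition
regular: if `A = A₁ ∪ ⋯ ∪ Aₙ` is piecewise `F`-syndetic then some `Aᵢ` is. -/
theorem piecewise_syndetic_partition_regular {G : Type*} [Group G]
    (F : Set (Set G)) (hF : IsFilterOn F)
    (hclosed : ∀ p q, p ∈ extendingUltra F → q ∈ extendingUltra F →
      filterProd p q ∈ extendingUltra F)
    (K : Set (Set (Set G))) (hK : IsSmallestIdealOf (extendingUltra F) K)
    (A : Set G) (hA : ∃ p ∈ K, A ∈ p)
    (n : ℕ) (As : Fin n → Set G) (hpart : A = ⋃ i, As i) :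
    ∃ i, ∃ p ∈ K, As i ∈ p := by
  obtain ⟨p, hpK, hAp⟩ := hA
  have hpT : p ∈ extendingUltra F := hK.1.2.1 hpK
  obtain ⟨i, hi⟩ := ultra_iUnion_mem p hpT.1 n As (hpart ▸ hAp)
  exact ⟨i, p, hpK, hi⟩
end

section
/- If T is the closed subsemigroup of βG of ultrafilters extending a filter F, p ∈ K(T) (the smallest two-sided ideal of T), and A ∈ p, then the set A/p = {x ∈ G : x⁻¹A ∈ p} is F-syndetic. -/
set_option linter.unusedSectionVars false

/-- `K⁻¹A = {k⁻¹a : k ∈ K, a ∈ A}`. -/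
def invMulSet {G : Type*} [Group G] (K A : Set G) : Set G :=
  {x | ∃ k ∈ K, ∃ a ∈ A, x = k⁻¹ * a}

/-- `B` is `F`-syndetic: for every `V ∈ F` there is a finite non-empty
`K ⊆ V` with `K⁻¹B ∈ F`. -/
def FSyndetic {G : Type*} [Group G] (F : Set (Set G)) (B : Set G) : Prop :=
  ∀ V ∈ F, ∃ K : Finset G, K.Nonempty ∧ ↑K ⊆ V ∧ invMulSet (↑K) B ∈ F

open Filter Set

attribute [local instance] Ultrafilter.mul Ultrafilter.semigroup

namespace SyndeticAux

variable {G : Type*} [Group G]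

theorem mem_umul {u v : Ultrafilter G} {A : Set G} :
    A ∈ u * v ↔ {x | {y | x * y ∈ A} ∈ v} ∈ u :=
  Ultrafilter.eventually_mul u v (· ∈ A)

/-- The family of sets of an ultrafilter. -/
def usets (u : Ultrafilter G) : Set (Set G) := {A | A ∈ u}

theorem mem_usets {u : Ultrafilter G} {A : Set G} : A ∈ usets u ↔ A ∈ u := Iff.rfl

theorem isUltraOn_usets (u : Ultrafilter G) : IsUltraOn (usets u) :=
  ⟨⟨u.empty_notMem, univ_mem, fun _ _ hA hAB => mem_of_superset hA hAB,
      fun _ _ hA hB => inter_mem hA hB⟩, fun A => u.mem_or_compl_mem A⟩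

theorem usets_mul (u v : Ultrafilter G) :
    filterProd (usets u) (usets v) = usets (u * v) :=
  Set.ext fun _ => mem_umul.symm

/-- Reconstructing an `Ultrafilter` from an `IsUltraOn` family. -/
noncomputable def toU (r : Set (Set G)) (h : IsUltraOn r) : Ultrafilter G :=
  Ultrafilter.ofComplNotMemIff
    ⟨r, h.1.2.1, fun hA hAB => h.1.2.2.1 _ _ hA hAB, fun hA hB => h.1.2.2.2 _ _ hA hB⟩
    (by
      intro s
      constructor
      · intro hs
        rcases h.2 s with h' | h'
        · exact h'
        · exact absurd h' hs
      · intro hs hcs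
        have : s ∩ sᶜ ∈ r := h.1.2.2.2 _ _ hs hcs
        rw [Set.inter_compl_self] at this
        exact h.1.1 this)

theorem mem_toU {r : Set (Set G)} {h : IsUltraOn r} {A : Set G} : A ∈ toU r h ↔ A ∈ r :=
  Iff.rfl

theorem usets_toU {r : Set (Set G)} (h : IsUltraOn r) : usets (toU r h) = r := rfl

/-- `L` is a left ideal of the subsemigroup `T` of `βG`. -/
def LId (T L : Set (Ultrafilter G)) : Prop :=
  L.Nonempty ∧ L ⊆ T ∧ ∀ u ∈ T, ∀ v ∈ L, u * v ∈ L

/-- `L` is a minimal left ideal of `T`. -/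
def MinLId (T L : Set (Ultrafilter G)) : Prop :=
  LId T L ∧ ∀ L', LId T L' → L' ⊆ L → L' = L

variable {T : Set (Ultrafilter G)}

theorem lid_insert_mul (hm : ∀ u ∈ T, ∀ v ∈ T, u * v ∈ T) {r : Ultrafilter G} (hr : r ∈ T) :
    LId T (insert r ((· * r) '' T)) := by
  refine ⟨⟨r, mem_insert _ _⟩, ?_, ?_⟩
  · rintro x (rfl | ⟨s, hs, rfl⟩)
    · exact hr
    · exact hm _ hs _ hr
  · rintro u hu v (rfl | ⟨s, hs, rfl⟩)
    · exact Or.inr ⟨u, hu, rfl⟩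
    · exact Or.inr ⟨u * s, hm _ hu _ hs, by show u * s * r = u * (s * r); exact mul_assoc u s r⟩

theorem lid_insert_mul_closed (hTc : IsClosed T) (r : Ultrafilter G) :
    IsClosed (insert r ((· * r) '' T)) := by
  have h1 : IsClosed ((· * r) '' T) :=
    (hTc.isCompact.image (Ultrafilter.continuous_mul_left r)).isClosed
  rw [Set.insert_eq]
  exact isClosed_singleton.union h1

theorem exists_minLId (hm : ∀ u ∈ T, ∀ v ∈ T, u * v ∈ T) (hTc : IsClosed T)
    {Lhat : Set (Ultrafilter G)} (hLhat : LId T Lhat) (hc : IsClosed Lhat) :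
    ∃ L₀, L₀ ⊆ Lhat ∧ MinLId T L₀ := by
  set S : Set (Set (Ultrafilter G)) := {L | LId T L ∧ IsClosed L} with hS
  have hzorn : ∀ c ⊆ S, IsChain (· ⊆ ·) c → c.Nonempty →
      ∃ lb ∈ S, ∀ s ∈ c, lb ⊆ s := by
    intro c hcS hchain hcne
    refine ⟨⋂₀ c, ⟨⟨?_, ?_, ?_⟩, isClosed_sInter fun L hL => (hcS hL).2⟩,
      fun s hs => sInter_subset_of_mem hs⟩
    · haveI := hcne.to_subtype
      refine IsCompact.nonempty_sInter_of_directed_nonempty_isCompact_isClosed ?_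
        (fun L hL => (hcS hL).1.1) (fun L hL => (hcS hL).2.isCompact)
        (fun L hL => (hcS hL).2)
      intro a ha b hb
      rcases eq_or_ne a b with rfl | hne
      · exact ⟨a, ha, Subset.rfl, Subset.rfl⟩
      · rcases hchain ha hb hne with h | h
        · exact ⟨a, ha, Subset.rfl, h⟩
        · exact ⟨b, hb, h, Subset.rfl⟩
    · obtain ⟨L, hL⟩ := hcne
      exact (sInter_subset_of_mem hL).trans (hcS hL).1.2.1
    · intro u hu v hv
      intro L hL
      exact (hcS hL).1.2.2 u hu v (hv L hL)
  obtain ⟨L₀, hsub, hmin⟩ := zorn_superset_nonempty S hzorn Lhat ⟨hLhat, hc⟩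
  refine ⟨L₀, hsub, hmin.prop.1, ?_⟩
  intro L' hL' hsubL'
  obtain ⟨r, hr⟩ := hL'.1
  have hrT : r ∈ T := hL'.2.1 hr
  have hMS : insert r ((· * r) '' T) ∈ S :=
    ⟨lid_insert_mul hm hrT, lid_insert_mul_closed hTc r⟩
  have hML' : insert r ((· * r) '' T) ⊆ L' := by
    rintro x (rfl | ⟨s, hs, rfl⟩)
    · exact hr
    · exact hL'.2.2 _ hs _ hr
  have hML₀ : insert r ((· * r) '' T) ⊆ L₀ := hML'.trans hsubL'
  have : L₀ ⊆ insert r ((· * r) '' T) := hmin.2 hMS hML₀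
  exact Subset.antisymm hsubL' (this.trans hML')

theorem minLId_mul (hm : ∀ u ∈ T, ∀ v ∈ T, u * v ∈ T) {L : Set (Ultrafilter G)}
    (hL : MinLId T L) {v : Ultrafilter G} (hv : v ∈ T) : MinLId T ((· * v) '' L) := by
  refine ⟨⟨hL.1.1.image _, ?_, ?_⟩, ?_⟩
  · rintro x ⟨s, hs, rfl⟩
    exact hm _ (hL.1.2.1 hs) _ hv
  · rintro u hu x ⟨s, hs, rfl⟩
    exact ⟨u * s, hL.1.2.2 u hu s hs, by show u * s * v = u * (s * v); exact mul_assoc u s v⟩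
  · intro L' hL' hsub
    set M : Set (Ultrafilter G) := {s | s ∈ L ∧ s * v ∈ L'} with hM
    have hMLId : LId T M := by
      refine ⟨?_, fun s hs => hL.1.2.1 hs.1, ?_⟩
      · obtain ⟨x, hx⟩ := hL'.1
        obtain ⟨s, hs, rfl⟩ := hsub hx
        exact ⟨s, hs, hx⟩
      · intro u hu s hs
        refine ⟨hL.1.2.2 u hu s hs.1, ?_⟩
        have : u * s * v = u * (s * v) := mul_assoc u s v
        rw [this]
        exact hL'.2.2 u hu _ hs.2
    have hMeq : M = L := hL.2 M hMLId fun s hs => hs.1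
    apply Subset.antisymm hsub
    rintro x ⟨s, hs, rfl⟩
    have : s ∈ M := hMeq ▸ hs
    exact this.2

theorem minLId_exists_eq (hm : ∀ u ∈ T, ∀ v ∈ T, u * v ∈ T) {L : Set (Ultrafilter G)}
    (hL : MinLId T L) {u₀ : Ultrafilter G} (hu₀ : u₀ ∈ L) {q : Ultrafilter G} (hq : q ∈ T) :
    ∃ s ∈ T, u₀ = s * (q * u₀) := by
  have hqu : q * u₀ ∈ L := hL.1.2.2 q hq u₀ hu₀
  have hMLId : LId T (insert (q * u₀) ((· * (q * u₀)) '' T)) :=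
    lid_insert_mul hm (hL.1.2.1 hqu)
  have hsub : insert (q * u₀) ((· * (q * u₀)) '' T) ⊆ L := by
    rintro x (rfl | ⟨s, hs, rfl⟩)
    · exact hqu
    · exact hL.1.2.2 _ hs _ hqu
  have heq := hL.2 _ hMLId hsub
  have hmem : u₀ ∈ insert (q * u₀) ((· * (q * u₀)) '' T) := heq ▸ hu₀
  rcases hmem with h | ⟨s, hs, hsr⟩
  · refine ⟨q, hq, ?_⟩
    conv_rhs => rw [← h]
    exact h
  · exact ⟨s, hs, hsr.symm⟩

theorem invMulSet_mono {K K' B : Set G} (h : K ⊆ K') : invMulSet K B ⊆ invMulSet K' B := by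
  rintro x ⟨k, hk, a, ha, rfl⟩
  exact ⟨k, h hk, a, ha, rfl⟩

theorem invMulSet_singleton (x : G) (B : Set G) :
    invMulSet ({x} : Set G) B = {z | x * z ∈ B} := by
  ext z
  constructor
  · rintro ⟨k, hk, a, ha, rfl⟩
    rcases hk with rfl
    simpa [mul_inv_cancel_left] using ha
  · intro hz
    exact ⟨x, rfl, x * z, hz, by group⟩


theorem sInter_mem_of_filterOn {F : Set (Set G)} (hF : IsFilterOn F) :
    ∀ t : Set (Set G), t.Finite → t ⊆ F → ⋂₀ t ∈ F := by
  intro t htf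
  refine Set.Finite.induction_on (motive := fun t _ => t ⊆ F → ⋂₀ t ∈ F) t htf ?_ ?_
  · intro _
    rw [Set.sInter_empty]
    exact hF.2.1
  · intro C t' _ _ ih hsub
    rw [Set.sInter_insert]
    exact hF.2.2.2 _ _ (hsub (Set.mem_insert _ _))
      (ih fun D hD => hsub (Set.mem_insert_of_mem _ hD))

theorem compl_subset_sInter {V B : Set G} (hVne : V.Nonempty) :
    ∀ t : Set (Set G), t.Finite →
      t ⊆ {C | ∃ Kf : Finset G, Kf.Nonempty ∧ ↑Kf ⊆ V ∧ C = (invMulSet (↑Kf) B)ᶜ} →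
      ∃ Kf : Finset G, Kf.Nonempty ∧ ↑Kf ⊆ V ∧ (invMulSet (↑Kf) B)ᶜ ⊆ ⋂₀ t := by
  classical
  intro t htf
  refine Set.Finite.induction_on (motive := fun t _ =>
    t ⊆ {C | ∃ Kf : Finset G, Kf.Nonempty ∧ ↑Kf ⊆ V ∧ C = (invMulSet (↑Kf) B)ᶜ} →
      ∃ Kf : Finset G, Kf.Nonempty ∧ ↑Kf ⊆ V ∧ (invMulSet (↑Kf) B)ᶜ ⊆ ⋂₀ t) t htf ?_ ?_
  · intro _
    obtain ⟨k₀, hk₀⟩ := hVne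
    exact ⟨{k₀}, Finset.singleton_nonempty _, by simpa using hk₀, by simp⟩
  · intro C t' _ _ ih hsub
    obtain ⟨K₁, hK₁ne, hK₁V, rfl⟩ := hsub (Set.mem_insert _ _)
    obtain ⟨K₂, hK₂ne, hK₂V, hK₂sub⟩ := ih fun D hD => hsub (Set.mem_insert_of_mem _ hD)
    refine ⟨K₁ ∪ K₂, hK₁ne.inl, ?_, ?_⟩
    · intro x hx
      rw [Finset.coe_union] at hx
      rcases hx with h | h
      · exact hK₁V h
      · exact hK₂V h
    · rw [Set.sInter_insert]
      refine Set.subset_inter ?_ ?_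
      · exact Set.compl_subset_compl.2 (invMulSet_mono
          (by rw [Finset.coe_union]; exact Set.subset_union_left))
      · exact (Set.compl_subset_compl.2 (invMulSet_mono
          (by rw [Finset.coe_union]; exact Set.subset_union_right))).trans hK₂sub

end SyndeticAux

/-- (Shuungula–Zelenyuk–Zelenyuk) If `T` is the closed subsemigroup of `βG` of
ultrafilters extending a filter `F`, `p ∈ K(T)` and `A ∈ p`, then
`A/p = {x : x⁻¹A ∈ p}` is `F`-syndetic. -/
theorem syndetic_of_smallest_ideal {G : Type*} [Group G]
    (F : Set (Set G)) (hF : IsFilterOn F)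
    (hclosed : ∀ p q, p ∈ extendingUltra F → q ∈ extendingUltra F →
      filterProd p q ∈ extendingUltra F)
    (K : Set (Set (Set G))) (hK : IsSmallestIdealOf (extendingUltra F) K)
    (p : Set (Set G)) (hp : p ∈ K) (A : Set G) (hA : A ∈ p) :
    FSyndetic F {x | {y | x * y ∈ A} ∈ p} := by
  classical
  obtain ⟨hKideal, hKsmall⟩ := hK
  set T : Set (Ultrafilter G) := {u | ∀ V ∈ F, V ∈ u} with hTdef
  have husets_mem : ∀ u : Ultrafilter G, u ∈ T → SyndeticAux.usets u ∈ extendingUltra F :=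
    fun u hu => ⟨SyndeticAux.isUltraOn_usets u, fun V hV => hu V hV⟩
  have hm : ∀ u ∈ T, ∀ v ∈ T, u * v ∈ T := by
    intro u hu v hv
    have h1 := hclosed _ _ (husets_mem u hu) (husets_mem v hv)
    rw [SyndeticAux.usets_mul] at h1
    exact fun V hV => h1.2 hV
  have hTc : IsClosed T := by
    have h1 : T = ⋂ V ∈ F, {u : Ultrafilter G | V ∈ u} := by
      ext u
      simp only [hTdef, Set.mem_setOf_eq, Set.mem_iInter]
    rw [h1]
    exact isClosed_biInter fun V _ => ultrafilter_isClosed_basic V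
  obtain ⟨k, hk⟩ := hKideal.1
  have hkE : k ∈ extendingUltra F := hKideal.2.1 hk
  have hTn : T.Nonempty := ⟨SyndeticAux.toU k hkE.1, fun V hV => hkE.2 hV⟩
  set U : Set (Set (Set G)) :=
    {r | ∃ u : Ultrafilter G, ∃ L, SyndeticAux.MinLId T L ∧ u ∈ L ∧ r = SyndeticAux.usets u}
    with hU
  have hUideal : IsIdealOf (extendingUltra F) U := by
    refine ⟨?_, ?_, ?_⟩
    · obtain ⟨L₀, _, hL₀⟩ := SyndeticAux.exists_minLId hm hTc ⟨hTn, Set.Subset.rfl, hm⟩ hTc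
      obtain ⟨u, hu⟩ := hL₀.1.1
      exact ⟨_, u, L₀, hL₀, hu, rfl⟩
    · rintro r ⟨u, L, hL, huL, rfl⟩
      exact husets_mem u (hL.1.2.1 huL)
    · rintro r hr s ⟨u, L, hL, huL, rfl⟩
      have hwT : SyndeticAux.toU r hr.1 ∈ T := fun V hV => hr.2 hV
      constructor
      · refine ⟨SyndeticAux.toU r hr.1 * u, L, hL, hL.1.2.2 _ hwT _ huL, ?_⟩
        rw [← SyndeticAux.usets_mul]
        rfl
      · refine ⟨u * SyndeticAux.toU r hr.1, _, SyndeticAux.minLId_mul hm hL hwT,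
          ⟨u, huL, rfl⟩, ?_⟩
        rw [← SyndeticAux.usets_mul]
        rfl
  have hpU : p ∈ U := hKsmall U hUideal hp
  obtain ⟨u₀, L₁, hL₁, hu₀L, hpu⟩ := hpU
  by_contra hsyn
  rw [FSyndetic] at hsyn
  push_neg at hsyn
  obtain ⟨V, hVF, hV⟩ := hsyn
  set B : Set G := {x | {y | x * y ∈ A} ∈ p} with hB
  have hVne : V.Nonempty := by
    rcases Set.eq_empty_or_nonempty V with rfl | h
    · exact absurd hVF hF.1
    · exact h
  set S₂ : Set (Set G) := {C | ∃ Kf : Finset G, Kf.Nonempty ∧ ↑Kf ⊆ V ∧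
    C = (invMulSet (↑Kf) B)ᶜ} with hS₂
  have hFIP : ∀ t, t ⊆ F ∪ S₂ → t.Finite → (⋂₀ t).Nonempty := by
    intro t hts htf
    have ht1 : ⋂₀ (t ∩ F) ∈ F :=
      SyndeticAux.sInter_mem_of_filterOn hF _ (htf.subset Set.inter_subset_left)
        Set.inter_subset_right
    have ht2 : (t \ F) ⊆ S₂ := by
      rintro C ⟨hCt, hCF⟩
      rcases hts hCt with h | h
      · exact absurd h hCF
      · exact h
    obtain ⟨Kf, hKne, hKV, hKsub⟩ :=
      SyndeticAux.compl_subset_sInter hVne _ (htf.subset Set.diff_subset) ht2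
    have hsplit : ⋂₀ t = ⋂₀ (t ∩ F) ∩ ⋂₀ (t \ F) := by
      rw [← Set.sInter_union, Set.inter_union_diff]
    have hne : (⋂₀ (t ∩ F) ∩ (invMulSet (↑Kf) B)ᶜ).Nonempty := by
      rw [Set.inter_compl_nonempty_iff]
      intro hsub2
      exact hV Kf hKne hKV (hF.2.2.1 _ _ ht1 hsub2)
    obtain ⟨x, hx1, hx2⟩ := hne
    rw [hsplit]
    exact ⟨x, hx1, hKsub hx2⟩
  have hg : (Filter.generate (F ∪ S₂)).NeBot := Filter.generate_neBot_iff.2 hFIP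
  set q : Ultrafilter G := @Ultrafilter.of _ _ hg with hq
  have hmemq : ∀ C ∈ F ∪ S₂, C ∈ q := fun C hC =>
    (@Ultrafilter.of_le _ _ hg) (Filter.mem_generate_of_mem hC)
  have hqT : q ∈ T := fun V' hV' => hmemq V' (Or.inl hV')
  obtain ⟨s, hsT, hseq⟩ := SyndeticAux.minLId_exists_eq hm hL₁ hu₀L hqT
  have hAu : A ∈ s * (q * u₀) := by
    rw [← hseq]
    exact SyndeticAux.mem_usets.1 (hpu ▸ hA)
  rw [SyndeticAux.mem_umul] at hAu
  obtain ⟨x, hxV, hx⟩ := Ultrafilter.nonempty_of_mem (inter_mem (hsT V hVF) hAu)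
  rw [Set.mem_setOf_eq, SyndeticAux.mem_umul] at hx
  have hxB : {z | x * z ∈ B} ∈ q := by
    have heq : {z | {w | z * w ∈ {y | x * y ∈ A}} ∈ u₀} = {z | x * z ∈ B} := by
      ext z
      have h1 : {w | z * w ∈ {y | x * y ∈ A}} = {w | (x * z) * w ∈ A} := by
        ext w
        simp [Set.mem_setOf_eq, mul_assoc]
      rw [Set.mem_setOf_eq, h1, Set.mem_setOf_eq, hB, Set.mem_setOf_eq, hpu]
      rfl
    rwa [heq] at hx
  have hcompl : {z | x * z ∈ B}ᶜ ∈ q := by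
    have hx1 : ((invMulSet (↑({x} : Finset G)) B)ᶜ : Set G) ∈ q :=
      hmemq _ (Or.inr ⟨{x}, Finset.singleton_nonempty x, by simpa using hxV, rfl⟩)
    rwa [Finset.coe_singleton, SyndeticAux.invMulSet_singleton] at hx1
  obtain ⟨z, hz1, hz2⟩ := Ultrafilter.nonempty_of_mem (inter_mem hxB hcompl)
  exact hz2 hz1
end

section
/- Let k ≥ 1 and S(p) = p(x+1), R(p) = p + x^k on ℤ[x]. If w₁ and w₂ are words in two letters, each letter appearing at most k times in each word, and w₁(R,S) = w₂(R,S) as maps on ℤ[x], then w₁ = w₂ as abstract words. -/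
open Polynomial Finset

namespace WordEvalAux

/-- the word evaluation map -/
noncomputable def W (k : ℕ) (w : List (Fin 2)) : ℤ[X] → ℤ[X] :=
  (w.map ![fun p : ℤ[X] => p + X ^ k, fun p : ℤ[X] => p.comp (X + 1)]).foldr (· ∘ ·) id

@[simp] lemma W_nil (k : ℕ) (p : ℤ[X]) : W k [] p = p := rfl

@[simp] lemma W_cons0 (k : ℕ) (w : List (Fin 2)) (p : ℤ[X]) :
    W k ((0 : Fin 2) :: w) p = W k w p + X ^ k := rfl

@[simp] lemma W_cons1 (k : ℕ) (w : List (Fin 2)) (p : ℤ[X]) :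
    W k ((1 : Fin 2) :: w) p = (W k w p).comp (X + 1) := rfl

/-- number of `0`s (R's) in `w` having exactly `i` `1`s before them -/
def Nf : List (Fin 2) → ℕ → ℕ
  | [], _ => 0
  | a :: t, i =>
      if a = 0 then (if i = 0 then Nf t 0 + 1 else Nf t i)
      else (if i = 0 then 0 else Nf t (i - 1))

lemma fin2 (a : Fin 2) : a = 0 ∨ a = 1 := by
  fin_cases a
  · left; rfl
  · right; rfl

lemma lemA (k : ℕ) (w : List (Fin 2)) (p : ℤ[X]) :
    W k w p = p.comp (X + C (w.count 1 : ℤ)) + W k w 0 := by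
  induction w generalizing p with
  | nil => simp
  | cons a t ih =>
    rcases fin2 a with rfl | rfl
    · simp only [W_cons0, List.count_cons]
      rw [ih p]
      norm_num
      ring
    · simp only [W_cons1, List.count_cons]
      rw [ih p, add_comp, comp_assoc]
      norm_num
      congr 1
      ring

end WordEvalAux

namespace WordEvalAux
open Finset

lemma Nf_eq_zero : ∀ (w : List (Fin 2)) (i : ℕ), w.count 1 < i → Nf w i = 0 := by
  intro w
  induction w with
  | nil => intro i _; rfl
  | cons a t ih =>
    intro i hi
    rcases fin2 a with rfl | rfl
    · simp only [List.count_cons] at hi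
      have h0 : i ≠ 0 := by omega
      simp only [Nf, if_neg h0]
      norm_num
      exact ih i (by omega)
    · simp only [List.count_cons] at hi
      norm_num at hi
      have h0 : i ≠ 0 := by omega
      simp only [Nf, if_neg h0]
      norm_num
      exact ih (i-1) (by omega)

lemma lemB (k : ℕ) : ∀ (w : List (Fin 2)) (n : ℕ), w.count 1 < n →
    W k w 0 = ∑ i ∈ range n, C ((Nf w i : ℤ)) * (X + C (i : ℤ)) ^ k := by
  intro w
  induction w with
  | nil => intro n _; simp [Nf]
  | cons a t ih =>
    intro n hn
    rcases fin2 a with rfl | rfl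
    · simp only [List.count_cons] at hn
      norm_num at hn
      rw [W_cons0, ih n hn]
      have hcong : ∀ i ∈ range n, C ((Nf ((0:Fin 2) :: t) i : ℤ)) * (X + C (i : ℤ)) ^ k
          = C ((Nf t i : ℤ)) * (X + C (i : ℤ)) ^ k
            + (if i = 0 then (X + C (i : ℤ)) ^ k else 0) := by
        intro i _
        by_cases h0 : i = 0
        · subst h0
          simp only [Nf, if_pos rfl, reduceIte]
          push_cast
          rw [C_add, C_1]
          ring
        · simp [Nf, h0]
      rw [Finset.sum_congr rfl hcong, Finset.sum_add_distrib, Finset.sum_ite_eq' (range n) 0]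
      have : (0:ℕ) ∈ range n := by simp; omega
      rw [if_pos this]
      simp
    · simp only [List.count_cons] at hn
      norm_num at hn
      obtain ⟨n', rfl⟩ : ∃ n', n = n' + 1 := ⟨n - 1, by omega⟩
      rw [W_cons1, ih n' (by omega), Finset.sum_range_succ']
      have h00 : C ((Nf ((1:Fin 2) :: t) 0 : ℤ)) * (X + C ((0:ℕ) : ℤ)) ^ k = 0 := by
        simp [Nf]
      rw [h00, add_zero]
      rw [Polynomial.sum_comp]
      apply Finset.sum_congr rfl
      intro i _
      have hsh : Nf ((1:Fin 2) :: t) (i + 1) = Nf t i := by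
        simp [Nf]
      rw [hsh, mul_comp, C_comp, pow_comp, add_comp, X_comp, C_comp]
      push_cast
      rw [C_add, C_1]
      ring

lemma lemC : ∀ (w₁ w₂ : List (Fin 2)), w₁.count 1 = w₂.count 1 →
    (∀ i, Nf w₁ i = Nf w₂ i) → w₁ = w₂ := by
  intro w₁
  induction w₁ with
  | nil =>
    intro w₂ hc hN
    cases w₂ with
    | nil => rfl
    | cons b t =>
      rcases fin2 b with rfl | rfl
      · have := hN 0
        simp [Nf] at this
      · simp [List.count_cons] at hc
  | cons a t₁ ih =>
    intro w₂ hc hN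
    cases w₂ with
    | nil =>
      rcases fin2 a with rfl | rfl
      · have := hN 0
        simp [Nf] at this
      · simp [List.count_cons] at hc
    | cons b t₂ =>
      rcases fin2 a with rfl | rfl <;> rcases fin2 b with rfl | rfl
      · have hc' : t₁.count 1 = t₂.count 1 := by simpa [List.count_cons] using hc
        have hN' : ∀ i, Nf t₁ i = Nf t₂ i := by
          intro i
          by_cases h0 : i = 0
          · subst h0; have := hN 0; simpa [Nf] using this
          · have := hN i; simpa [Nf, h0] using this
        rw [ih t₂ hc' hN']
      · have := hN 0; simp [Nf] at this
      · have := hN 0; simp [Nf] at this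
      · have hc' : t₁.count 1 = t₂.count 1 := by
          simp [List.count_cons] at hc; omega
        have hN' : ∀ i, Nf t₁ i = Nf t₂ i := by
          intro i
          have := hN (i + 1)
          simpa [Nf] using this
        rw [ih t₂ hc' hN']

lemma lemD (k : ℕ) (d : ℕ → ℤ)
    (hd : ∑ i ∈ range (k + 1), C (d i) * (X + C (i : ℤ)) ^ k = 0) :
    ∀ i ∈ range (k + 1), d i = 0 := by
  -- power-sum relations
  have He : ∀ e ≤ k, ∑ i ∈ range (k + 1), d i * (i : ℤ) ^ e = 0 := by
    intro e he
    have h0 := congrArg (fun p : ℤ[X] => p.coeff (k - e)) hd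
    simp only [finset_sum_coeff, coeff_C_mul, coeff_X_add_C_pow, coeff_zero] at h0
    have hke : k - (k - e) = e := by omega
    rw [hke] at h0
    have h1 : (∑ i ∈ range (k + 1), d i * (i : ℤ) ^ e) * (k.choose (k - e) : ℤ) = 0 := by
      rw [Finset.sum_mul, ← h0]
      apply Finset.sum_congr rfl
      intro i _
      ring
    have hch : (k.choose (k - e) : ℤ) ≠ 0 := by
      have := Nat.choose_pos (show k - e ≤ k by omega)
      exact_mod_cast this.ne'
    exact (mul_eq_zero.mp h1).resolve_right hch
  intro i₀ hi₀
  set s := (range (k + 1)).erase i₀ with hs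
  set f : ℤ[X] := ∏ i ∈ s, (X - C (i : ℤ)) with hf
  have hdeg : f.natDegree = k := by
    rw [hf, natDegree_prod]
    · simp only [natDegree_X_sub_C]
      rw [Finset.sum_const, smul_eq_mul, mul_one, hs, Finset.card_erase_of_mem hi₀,
        Finset.card_range]
      omega
    · intro i _; exact X_sub_C_ne_zero _
  have hev : ∀ x : ℤ, f.eval x = ∏ i ∈ s, (x - (i : ℤ)) := by
    intro x; simp [hf, eval_prod]
  have hsum : ∑ i ∈ range (k + 1), d i * f.eval (i : ℤ) = 0 := by
    have hrw : ∀ i ∈ range (k + 1),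
        d i * f.eval (i : ℤ) = ∑ e ∈ range (k + 1), f.coeff e * (d i * (i : ℤ) ^ e) := by
      intro i _
      rw [eval_eq_sum_range' (by omega : f.natDegree < k + 1), Finset.mul_sum]
      apply Finset.sum_congr rfl
      intro e _
      ring
    rw [Finset.sum_congr rfl hrw, Finset.sum_comm]
    apply Finset.sum_eq_zero
    intro e he
    rw [← Finset.mul_sum, He e (by simpa using Nat.lt_succ_iff.mp (Finset.mem_range.mp he))]
    ring
  have hne : f.eval (i₀ : ℤ) ≠ 0 := by
    rw [hev]
    apply Finset.prod_ne_zero_iff.mpr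
    intro i hi
    have : i ≠ i₀ := Finset.ne_of_mem_erase hi
    have : (i : ℤ) ≠ (i₀ : ℤ) := by exact_mod_cast this
    omega
  have hz : d i₀ * f.eval (i₀ : ℤ) = 0 := by
    rw [← hsum]
    rw [Finset.sum_eq_single i₀]
    · intro i hi hine
      have : f.eval (i : ℤ) = 0 := by
        rw [hev]
        apply Finset.prod_eq_zero (Finset.mem_erase.mpr ⟨hine, hi⟩)
        ring
      rw [this, mul_zero]
    · intro h; exact absurd hi₀ h
    -- order: Finset.sum_eq_single gives goals; adjust
  exact (mul_eq_zero.mp hz).resolve_right hne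

end WordEvalAux

open WordEvalAux in
/-- Let `S(p) = p(x+1)` and `R(p) = p + x^k` on `ℤ[x]`.  If `w₁, w₂` are words
in two letters (letter `0` standing for `R`, letter `1` for `S`), each letter
appearing at most `k` times in each word, and the compositions `w₁(R,S)` and
`w₂(R,S)` are equal as maps `ℤ[x] → ℤ[x]`, then `w₁ = w₂` as abstract words. -/
theorem word_eval_injective (k : ℕ) (hk : 1 ≤ k) (w₁ w₂ : List (Fin 2))
    (h₁ : ∀ a : Fin 2, w₁.count a ≤ k) (h₂ : ∀ a : Fin 2, w₂.count a ≤ k)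
    (heq :
      (w₁.map ![fun p : ℤ[X] => p + X ^ k,
                fun p : ℤ[X] => p.comp (X + 1)]).foldr (· ∘ ·) id =
      (w₂.map ![fun p : ℤ[X] => p + X ^ k,
                fun p : ℤ[X] => p.comp (X + 1)]).foldr (· ∘ ·) id) :
    w₁ = w₂ := by
  have heq' : W k w₁ = W k w₂ := heq
  have hQ : W k w₁ 0 = W k w₂ 0 := congrFun heq' 0
  have hX := congrFun heq' X
  rw [lemA k w₁ X, hQ, lemA k w₂ X, X_comp, X_comp] at hX
  have hm : w₁.count 1 = w₂.count 1 := by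
    have h3 := add_right_cancel hX
    have h4 : C ((w₁.count 1 : ℤ)) = C ((w₂.count 1 : ℤ)) := add_left_cancel h3
    have h5 : ((w₁.count 1 : ℤ)) = ((w₂.count 1 : ℤ)) := C_injective h4
    exact_mod_cast h5
  rw [lemB k w₁ (k + 1) (by have := h₁ 1; omega),
      lemB k w₂ (k + 1) (by have := h₂ 1; omega)] at hQ
  have hd : ∑ i ∈ Finset.range (k + 1),
      C ((Nf w₁ i : ℤ) - (Nf w₂ i : ℤ)) * (X + C (i : ℤ)) ^ k = 0 := by
    simp only [C_sub, sub_mul, Finset.sum_sub_distrib, hQ, sub_self]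
  have hz := lemD k _ hd
  apply lemC _ _ hm
  intro i
  by_cases hik : i < k + 1
  · have h6 := hz i (Finset.mem_range.mpr hik)
    have h7 : (Nf w₁ i : ℤ) = (Nf w₂ i : ℤ) := sub_eq_zero.mp h6
    exact_mod_cast h7
  · rw [Nf_eq_zero w₁ i (by have := h₁ 1; omega),
        Nf_eq_zero w₂ i (by have := h₂ 1; omega)]
end
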